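/- Let λ be an atomless Borel probability measure on [0,1] and let 0 ≤ a ≤ b ≤ 1. Then (Vλ)([a,b]) = λ([a,b])·( λ([a,b]) + 2q·λ([0,a)) + 2p·λ((b,1]) ). -/

import Mathlib

open MeasureTheory Set Filter Topology ENNReal

/-- The unit interval `[0,1]` as a measurable space (with the Borel σ-algebra). -/
abbrev UnitInt : Type := ↥(Set.Icc (0:ℝ) 1)

/-- The family of measures `P(x,y,·)`: `p·δ_x + q·δ_y` if `x < y`, `δ_x` if `x = y`,
and `p·δ_y + q·δ_x` if `x > y`. -/
noncomputable def Pker (p q : ℝ) (x y : UnitInt) : Measure UnitInt :=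
  if x < y then ENNReal.ofReal p • Measure.dirac x + ENNReal.ofReal q • Measure.dirac y
  else if y < x then ENNReal.ofReal p • Measure.dirac y + ENNReal.ofReal q • Measure.dirac x
  else Measure.dirac x
/-- for an atomless Borel probability measure λ on [0,1] and 0 ≤ a ≤ b ≤ 1,
(Vλ)([a,b]) = λ([a,b])·(λ([a,b]) + 2q·λ([0,a)) + 2p·λ((b,1])). -/
theorem V_interval_formula (p q : ℝ) (hp : 0 ≤ p) (hq : 0 ≤ q) (hpq : p + q = 1)
    (V : Measure UnitInt → Measure UnitInt)
    (hV : ∀ (μ : Measure UnitInt) (A : Set UnitInt), MeasurableSet A →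
      V μ A = ∫⁻ x, ∫⁻ y, Pker p q x y A ∂μ ∂μ)
    (lam : Measure UnitInt) [IsProbabilityMeasure lam] [NullSingletonClass lam]
    (a b : UnitInt) (hab : a ≤ b) :
    V lam (Set.Icc a b)
      = lam (Set.Icc a b) * (lam (Set.Icc a b)
          + ENNReal.ofReal (2*q) * lam (Set.Iio a)
          + ENNReal.ofReal (2*p) * lam (Set.Ioi b)) := by
  classical
  have hIcc : MeasurableSet (Icc a b) := measurableSet_Icc
  set op := ENNReal.ofReal p with hop
  set oq := ENNReal.ofReal q with hoq
  have hopq : op + oq = 1 := by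
    rw [hop, hoq, ← ENNReal.ofReal_add hp hq, hpq, ENNReal.ofReal_one]
  have hmin : ∀ x : UnitInt, Measurable fun y : UnitInt => min x y :=
    fun x => measurable_const.min measurable_id
  have hmax : ∀ x : UnitInt, Measurable fun y : UnitInt => max x y :=
    fun x => measurable_const.max measurable_id
  have hS1 : ∀ x : UnitInt, MeasurableSet {y : UnitInt | min x y ∈ Icc a b} :=
    fun x => (hmin x) hIcc
  have hS2 : ∀ x : UnitInt, MeasurableSet {y : UnitInt | max x y ∈ Icc a b} :=
    fun x => (hmax x) hIcc
  -- pointwise formula for the kernel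
  have hP : ∀ x y : UnitInt, Pker p q x y (Icc a b)
      = op * {y : UnitInt | min x y ∈ Icc a b}.indicator 1 y
        + oq * {y : UnitInt | max x y ∈ Icc a b}.indicator 1 y := by
    intro x y
    have e1 : ({y : UnitInt | min x y ∈ Icc a b}.indicator 1 y : ℝ≥0∞)
        = (Icc a b).indicator 1 (min x y) := by
      simp only [Set.indicator_apply, mem_setOf_eq, Pi.one_apply]
    have e2 : ({y : UnitInt | max x y ∈ Icc a b}.indicator 1 y : ℝ≥0∞)
        = (Icc a b).indicator 1 (max x y) := by
      simp only [Set.indicator_apply, mem_setOf_eq, Pi.one_apply]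
    rw [e1, e2]
    rcases lt_trichotomy x y with h | h | h
    · simp [Pker, h, min_eq_left h.le, max_eq_right h.le,
        Measure.dirac_apply' _ hIcc, mul_comm, hop, hoq]
    · subst h
      simp only [Pker, lt_irrefl, if_false, Measure.dirac_apply' _ hIcc,
        min_self, max_self, ← add_mul, hopq, one_mul]
    · simp [Pker, h, h.not_gt, min_eq_right h.le, max_eq_left h.le,
        Measure.dirac_apply' _ hIcc, mul_comm, add_comm, hop, hoq]
  -- inner integral
  have inner : ∀ x : UnitInt, (∫⁻ y, Pker p q x y (Icc a b) ∂lam)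
      = op * lam {y : UnitInt | min x y ∈ Icc a b}
        + oq * lam {y : UnitInt | max x y ∈ Icc a b} := by
    intro x
    simp only [hP]
    rw [lintegral_add_left ((measurable_one.indicator (hS1 x)).const_mul _),
      lintegral_const_mul _ (measurable_one.indicator (hS1 x)),
      lintegral_const_mul _ (measurable_one.indicator (hS2 x)),
      lintegral_indicator_one (hS1 x), lintegral_indicator_one (hS2 x)]
  -- the min-set as a function of x
  have hS1eq : ∀ x : UnitInt, lam {y : UnitInt | min x y ∈ Icc a b}
      = (Icc a b).indicator (fun _ => lam (Ici a)) x
        + (Ioi b).indicator (fun _ => lam (Icc a b)) x := by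
    intro x
    rcases lt_or_ge x a with h | h
    · have hset : {y : UnitInt | min x y ∈ Icc a b} = ∅ := by
        ext y
        simp only [mem_setOf_eq, mem_empty_iff_false, iff_false, mem_Icc, not_and]
        intro h1
        exact absurd (le_trans h1 (min_le_left x y)) (not_le.2 h)
      have hx1 : x ∉ Icc a b := fun hx => absurd hx.1 (not_le.2 h)
      have hx2 : x ∉ Ioi b := fun hx => absurd (h.trans_le hab) (not_lt.2 hx.le)
      rw [hset]; simp [hx1, hx2]
    · rcases le_or_gt x b with h' | h'
      · have hset : {y : UnitInt | min x y ∈ Icc a b} = Ici a := by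
          ext y
          simp only [mem_setOf_eq, mem_Icc, mem_Ici]
          constructor
          · intro hy; exact le_trans hy.1 (min_le_right x y)
          · intro hy; exact ⟨le_min h hy, le_trans (min_le_left x y) h'⟩
        have hx1 : x ∈ Icc a b := ⟨h, h'⟩
        have hx2 : x ∉ Ioi b := fun hx => absurd hx (not_lt.2 h')
        rw [hset]; simp [hx1, hx2]
      · have hset : {y : UnitInt | min x y ∈ Icc a b} = Icc a b := by
          ext y
          simp only [mem_setOf_eq, mem_Icc]
          constructor
          · intro hy
            refine ⟨le_trans hy.1 (min_le_right x y), ?_⟩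
            by_contra hyb
            exact absurd hy.2 (not_le.2 (lt_min h' (not_le.1 hyb)))
          · intro hy
            exact ⟨le_min (hab.trans h'.le) hy.1, le_trans (min_le_right x y) hy.2⟩
        have hx1 : x ∉ Icc a b := fun hx => absurd h' (not_lt.2 hx.2)
        have hx2 : x ∈ Ioi b := h'
        rw [hset]; simp [hx1, hx2]
  -- the max-set as a function of x
  have hS2eq : ∀ x : UnitInt, lam {y : UnitInt | max x y ∈ Icc a b}
      = (Iio a).indicator (fun _ => lam (Icc a b)) x
        + (Icc a b).indicator (fun _ => lam (Iic b)) x := by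
    intro x
    rcases lt_or_ge x a with h | h
    · have hset : {y : UnitInt | max x y ∈ Icc a b} = Icc a b := by
        ext y
        simp only [mem_setOf_eq, mem_Icc]
        constructor
        · intro hy
          refine ⟨?_, le_trans (le_max_right x y) hy.2⟩
          by_contra hya
          exact absurd hy.1 (not_le.2 (max_lt h (not_le.1 hya)))
        · intro hy
          exact ⟨le_trans hy.1 (le_max_right x y), max_le (h.le.trans (hy.1.trans hy.2)) hy.2⟩
      have hx1 : x ∈ Iio a := h
      have hx2 : x ∉ Icc a b := fun hx => absurd hx.1 (not_le.2 h)
      rw [hset]; simp [hx1, hx2]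
    · rcases le_or_gt x b with h' | h'
      · have hset : {y : UnitInt | max x y ∈ Icc a b} = Iic b := by
          ext y
          simp only [mem_setOf_eq, mem_Icc, mem_Iic]
          constructor
          · intro hy; exact le_trans (le_max_right x y) hy.2
          · intro hy; exact ⟨le_trans h (le_max_left x y), max_le h' hy⟩
        have hx1 : x ∉ Iio a := fun hx => absurd hx (not_lt.2 h)
        have hx2 : x ∈ Icc a b := ⟨h, h'⟩
        rw [hset]; simp [hx1, hx2]
      · have hset : {y : UnitInt | max x y ∈ Icc a b} = ∅ := by
          ext y
          simp only [mem_setOf_eq, mem_empty_iff_false, iff_false, mem_Icc, not_and]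
          intro _
          exact not_le.2 (h'.trans_le (le_max_left x y))
        have hx1 : x ∉ Iio a := fun hx => absurd (hx.trans_le hab) (not_lt.2 h'.le)
        have hx2 : x ∉ Icc a b := fun hx => absurd h' (not_lt.2 hx.2)
        rw [hset]; simp [hx1, hx2]
  -- set abbreviations
  set m := lam (Icc a b) with hm
  set u := lam (Iio a) with hu
  set v := lam (Ioi b) with hv
  have hIci : lam (Ici a) = m + v := by
    rw [← Icc_union_Ioi_eq_Ici hab,
      measure_union (by exact Set.disjoint_left.2 fun y hy hy' => absurd hy.2 (not_le.2 hy'))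
        measurableSet_Ioi]
  have hIic : lam (Iic b) = u + m := by
    rw [← Iio_union_Icc_eq_Iic hab,
      measure_union (by exact Set.disjoint_left.2 fun y hy hy' => absurd hy'.1 (not_le.2 hy))
        measurableSet_Icc]
  -- compute the double integral
  rw [hV lam (Icc a b) hIcc]
  simp only [inner, hS1eq, hS2eq, hIci, hIic]
  have mble1 : Measurable fun x : UnitInt =>
      (Icc a b).indicator (fun _ => m + v) x + (Ioi b).indicator (fun _ => m) x :=
    (measurable_const.indicator hIcc).add (measurable_const.indicator measurableSet_Ioi)
  have mble2 : Measurable fun x : UnitInt =>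
      (Iio a).indicator (fun _ => m) x + (Icc a b).indicator (fun _ => u + m) x :=
    (measurable_const.indicator measurableSet_Iio).add (measurable_const.indicator hIcc)
  rw [lintegral_add_left (mble1.const_mul _), lintegral_const_mul _ mble1,
    lintegral_const_mul _ mble2,
    lintegral_add_left ((measurable_const.indicator hIcc)),
    lintegral_add_left ((measurable_const.indicator measurableSet_Iio)),
    lintegral_indicator_const hIcc, lintegral_indicator_const measurableSet_Ioi,
    lintegral_indicator_const measurableSet_Iio, lintegral_indicator_const hIcc]
  have h2q : ENNReal.ofReal (2*q) = 2 * oq := by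
    rw [ENNReal.ofReal_mul (by norm_num : (0:ℝ) ≤ 2), hoq]; norm_num
  have h2p : ENNReal.ofReal (2*p) = 2 * op := by
    rw [ENNReal.ofReal_mul (by norm_num : (0:ℝ) ≤ 2), hop]; norm_num
  rw [h2q, h2p]
  have : op * ((m + v) * m + m * v) + oq * (m * u + (u + m) * m)
      = (op + oq) * (m * m) + 2 * op * (m * v) + 2 * oq * (m * u) := by ring
  rw [this, hopq]
  ring
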